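/- The k-tortoise complexity of the regular paperfolding word satisfies: ρ^{t(3)}_f(n) = 4n for all n ≥ 14, ρ^{t(4)}_f(n) = 4n for all n ≥ 25, and ρ^{t(5)}_f(n) = 4n for all n ≥ 26. -/

import Mathlib

/-- The tortoise operation on binary words: if the word contains a 1 (`true`),
delete the first occurrence of 1 and append a 1 at the right end; otherwise do nothing. -/
def tortoise (w : List Bool) : List Bool :=
  if true ∈ w then (w.erase true) ++ [true] else w

/-- `w` is a factor (subword) of the infinite word `x`. -/
def IsFactor (x : ℕ → Bool) (w : List Bool) : Prop :=
  ∃ i, w = (List.range w.length).map (fun t => x (i + t))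

/-- The set of length-`n` factors of `x`. -/
def factorSet (x : ℕ → Bool) (n : ℕ) : Set (List Bool) :=
  {w | w.length = n ∧ IsFactor x w}

/-- The factor complexity of `x`. -/
noncomputable def rho (x : ℕ → Bool) (n : ℕ) : ℕ :=
  (factorSet x n).ncard

/-- The tortoise complexity of `x`: the number of `∼ₜ`-equivalence classes of
length-`n` factors of `x`, i.e. the number of distinct images under `tortoise`. -/
noncomputable def rhoTort (x : ℕ → Bool) (n : ℕ) : ℕ :=
  (tortoise '' factorSet x n).ncard

/-- The `k`-tortoise complexity of `x`: the number of equivalence classes of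
length-`n` factors of `x` under `tortoise^[k] w = tortoise^[k] v`. -/
noncomputable def rhoTortK (k : ℕ) (x : ℕ → Bool) (n : ℕ) : ℕ :=
  ((tortoise^[k]) '' factorSet x n).ncard

/-- `y` is a left special factor of `x`: both `0y` and `1y` are factors of `x`. -/
def LeftSpecial (x : ℕ → Bool) (y : List Bool) : Prop :=
  IsFactor x (false :: y) ∧ IsFactor x (true :: y)

/-- The Thue–Morse sequence: `tm n` is the parity of the number of 1's in the
binary expansion of `n` (`true` = 1). -/
def tm (n : ℕ) : Bool :=
  decide ((Nat.digits 2 n).sum % 2 = 1)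

/-- The regular paperfolding sequence, reindexed so that `pf m = f_{m+1}`:
writing `m + 1 = n' * 2^k` with `n'` odd, `pf m = true` iff `n' ≡ 3 (mod 4)`. -/
def pf (m : ℕ) : Bool :=
  decide ((m + 1) / 2 ^ (padicValNat 2 (m + 1)) % 4 = 3)

def pfAux : ℕ → ℕ → Bool
  | 0, _ => false
  | f+1, m => if m % 2 = 0 then decide ((m / 2) % 2 = 1) else pfAux f (m / 2)

def pfB (m : ℕ) : Bool := pfAux (m+1) m

lemma pf_spec (v q : ℕ) (hq : q % 2 = 1) : pf (2 ^ v * q - 1) = decide (q % 4 = 3) := by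
  have hq0 : 0 < q := by omega
  have hpos : 0 < 2 ^ v * q := by positivity
  have h1 : 2 ^ v * q - 1 + 1 = 2 ^ v * q := by omega
  unfold pf
  rw [h1]
  have hv : padicValNat 2 (2 ^ v * q) = v := by
    rw [padicValNat.mul (by positivity) (by omega), padicValNat.prime_pow,
      padicValNat.eq_zero_of_not_dvd (by omega)]
    omega
  rw [hv, Nat.mul_div_cancel_left _ (by positivity)]

lemma pf_decomp (m : ℕ) :
    ∃ v q, q % 2 = 1 ∧ m + 1 = 2 ^ v * q := by
  refine ⟨(m+1).factorization 2, (m+1) / 2 ^ ((m+1).factorization 2), ?_, ?_⟩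
  · have h2 := Nat.not_dvd_ordCompl Nat.prime_two (show m + 1 ≠ 0 by omega)
    omega
  · exact (Nat.ordProj_mul_ordCompl_eq_self (m+1) 2).symm

lemma pf_even (j : ℕ) : pf (2 * j) = decide (j % 2 = 1) := by
  have h : (2:ℕ) ^ 0 * (2 * j + 1) - 1 = 2 * j := by norm_num
  rw [← h, pf_spec 0 (2*j+1) (by omega)]
  have : (2*j+1) % 4 = 3 ↔ j % 2 = 1 := by omega
  simp [this]

lemma pf_odd (j : ℕ) : pf (2 * j + 1) = pf j := by
  obtain ⟨v, q, hq, hd⟩ := pf_decomp j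
  have h1 : 2 * j + 1 = 2 ^ (v+1) * q - 1 := by
    have h3 : (2:ℕ) ^ (v+1) * q = 2 * (2 ^ v * q) := by rw [pow_succ]; ring
    rw [h3]
    omega
  have h2 : j = 2 ^ v * q - 1 := by omega
  rw [h1, pf_spec _ _ hq, h2, pf_spec _ _ hq]

lemma pfAux_correct : ∀ f m, m < f → pfAux f m = pf m := by
  intro f
  induction f with
  | zero => omega
  | succ f ih =>
    intro m hm
    rw [pfAux]
    by_cases h : m % 2 = 0
    · rw [if_pos h]
      conv_rhs => rw [show m = 2 * (m / 2) by omega]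
      rw [pf_even]
    · rw [if_neg h]
      rw [ih (m/2) (by omega)]
      conv_rhs => rw [show m = 2 * (m / 2) + 1 by omega]
      rw [pf_odd]

lemma pf_eq_pfB (m : ℕ) : pf m = pfB m := (pfAux_correct (m+1) m (by omega)).symm

example : pfB 0 = false ∧ pfB 2 = true ∧ pfB 5 = true := by decide

lemma pf_pow_mul (s c : ℕ) (hc : 0 < c) : pf (2 ^ s * c - 1) = pf (c - 1) := by
  obtain ⟨v, q, hq, hd⟩ := pf_decomp (c - 1)
  have hcd : c = 2 ^ v * q := by omega
  have h1 : 2 ^ s * c - 1 = 2 ^ (s + v) * q - 1 := by rw [hcd, pow_add]; ring_nf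
  rw [h1, pf_spec _ _ hq]
  have h2 : c - 1 = 2 ^ v * q - 1 := by omega
  rw [h2, pf_spec _ _ hq]

def segP (i n : ℕ) : List Bool := (List.range n).map fun t => pf (i + t)

lemma segP_congr {i j n : ℕ} (h : ∀ t < n, pf (i + t) = pf (j + t)) :
    segP i n = segP j n := by
  unfold segP
  apply List.map_congr_left
  intro t ht
  exact h t (List.mem_range.mp ht)

lemma modeq_shift {d : ℕ} (M i t e : ℕ) (hdM : d ∣ M) :
    (i % M + M * e + t) ≡ (i + t) [MOD d] := by
  have h1 : i % M ≡ i [MOD d] := (Nat.mod_modEq i M).of_dvd hdM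
  have h2 : M * e ≡ 0 [MOD d] := (Nat.modEq_zero_iff_dvd).mpr (hdM.mul_right e)
  have := (h1.add h2).add_right t
  simpa using this

lemma dvd_of_modeq {d x y : ℕ} (h : x ≡ y [MOD d]) (hy : d ∣ y) : d ∣ x :=
  (Nat.modEq_zero_iff_dvd).mp (h.trans ((Nat.modEq_zero_iff_dvd).mpr hy))

lemma pf_mod_eq {s v q m m' : ℕ} (hq : q % 2 = 1) (hm : m + 1 = 2 ^ v * q)
    (hs : v + 2 ≤ s) (h : m ≡ m' [MOD 2 ^ s]) : pf m = pf m' := by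
  have hd4 : (2:ℕ) ^ (v + 2) ∣ 2 ^ s := pow_dvd_pow 2 hs
  have hmod : (m + 1) % 2 ^ (v + 2) = (m' + 1) % 2 ^ (v + 2) := (h.add_right 1).of_dvd hd4
  have hp2 : (2:ℕ) ^ (v + 2) = 2 ^ v * 4 := by rw [pow_add]; norm_num
  have hml : (m + 1) % 2 ^ (v + 2) = 2 ^ v * (q % 4) := by
    rw [hm, hp2, Nat.mul_mod_mul_left]
  set D := (m' + 1) / 2 ^ (v + 2) with hD
  have hdm : m' + 1 = 2 ^ (v + 2) * D + (m' + 1) % 2 ^ (v + 2) := (Nat.div_add_mod _ _).symm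
  set q' := 4 * D + q % 4 with hq'
  have hm' : m' + 1 = 2 ^ v * q' := by
    rw [hdm, ← hmod, hml, hp2, hq']; ring
  have hq'4 : q' % 4 = q % 4 := by omega
  have hq'2 : q' % 2 = 1 := by omega
  have e1 : m = 2 ^ v * q - 1 := by omega
  have e2 : m' = 2 ^ v * q' - 1 := by omega
  rw [e1, e2, pf_spec _ _ hq, pf_spec _ _ hq'2, hq'4]

lemma pf_small_exists (u : ℕ) (hu : u = 1 ∨ u = 2) (b : Bool) :
    ∃ e < 4, pf (u + 2 * e - 1) = b := by
  have h0 : pf 0 = false := by rw [show 0 = 2^0*1-1 by norm_num, pf_spec 0 1 (by norm_num)]; decide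
  have h2 : pf 2 = true := by rw [show 2 = 2^0*3-1 by norm_num, pf_spec 0 3 (by norm_num)]; decide
  have h1 : pf 1 = false := by rw [show 1 = 2^1*1-1 by norm_num, pf_spec 1 1 (by norm_num)]; decide
  have h5 : pf 5 = true := by rw [show 5 = 2^1*3-1 by norm_num, pf_spec 1 3 (by norm_num)]; decide
  rcases hu with rfl | rfl
  · cases b
    · exact ⟨0, by norm_num, h0⟩
    · exact ⟨1, by norm_num, h2⟩
  · cases b
    · exact ⟨0, by norm_num, h1⟩
    · exact ⟨2, by norm_num, h5⟩

lemma canonical_occurrence (a n i : ℕ) (hn : n ≤ 2 ^ a) :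
    ∃ i' < 2 ^ (a + 3), segP i' n = segP i n := by
  set M := 2 ^ (a + 1) with hM
  have hM2 : M = 2 * 2 ^ a := by rw [hM, pow_succ]; ring
  have hMpos : 0 < M := by positivity
  have hapos : 0 < (2:ℕ) ^ a := by positivity
  have hbig : 2 ^ (a + 3) = 4 * M := by rw [hM]; ring
  have haM : (2:ℕ) ^ a ∣ M := by rw [hM]; exact pow_dvd_pow 2 (Nat.le_succ a)
  -- generic congruence for non-hole positions
  have main : ∀ e t, ¬ (2 ^ a ∣ (i + t + 1)) → pf (i % M + M * e + t) = pf (i + t) := by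
    intro e t hnd
    obtain ⟨v, q, hq, hm⟩ := pf_decomp (i % M + M * e + t)
    have hva : v < a := by
      by_contra hva
      push_neg at hva
      apply hnd
      have h3 : (2:ℕ) ^ a ∣ i % M + M * e + t + 1 :=
        (pow_dvd_pow 2 hva).trans ⟨q, hm⟩
      exact dvd_of_modeq ((modeq_shift M i (t+1) e haM).symm) h3
    exact pf_mod_eq (s := a + 1) hq hm (by omega)
      (modeq_shift M i t e (by rw [hM]))
  by_cases hhole : ∃ t0, t0 < n ∧ 2 ^ a ∣ (i + t0 + 1)
  · obtain ⟨t0, ht0n, ht0d⟩ := hhole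
    have hrd : 2 ^ a ∣ i % M + t0 + 1 := by
      have hm1 := modeq_shift (d := 2^a) M i (t0 + 1) 0 haM
      simp only [Nat.mul_zero, Nat.add_zero] at hm1
      have hm2 : (i % M + t0 + 1) ≡ (i + t0 + 1) [MOD 2^a] := by
        rw [Nat.add_assoc, Nat.add_assoc i]
        exact hm1
      exact dvd_of_modeq hm2 ht0d
    obtain ⟨u, hu⟩ := hrd
    have hrlt : i % M + t0 + 1 < 3 * 2 ^ a := by
      have : i % M < M := Nat.mod_lt _ hMpos
      omega
    have hu12 : u = 1 ∨ u = 2 := by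
      have hu0 : u ≠ 0 := by rintro rfl; omega
      have hu3 : u < 3 := by
        by_contra hc
        push_neg at hc
        have h3 : 3 * 2 ^ a ≤ 2 ^ a * u := by
          calc 3 * 2 ^ a = 2 ^ a * 3 := by ring
          _ ≤ 2 ^ a * u := Nat.mul_le_mul_left _ hc
        omega
      omega
    have hcc : i + t0 + 1 = 2 ^ a * ((i + t0 + 1) / 2 ^ a) := (Nat.mul_div_cancel' ht0d).symm
    set c := (i + t0 + 1) / 2 ^ a with hc
    have hcpos : 0 < c := by
      rcases Nat.eq_zero_or_pos c with h | h
      · rw [h, Nat.mul_zero] at hcc; omega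
      · exact h
    obtain ⟨e, he4, hpe⟩ := pf_small_exists u hu12 (pf (c - 1))
    have hMe : M * e ≤ M * 3 := Nat.mul_le_mul_left M (by omega)
    have hiM : i % M < M := Nat.mod_lt _ hMpos
    refine ⟨i % M + M * e, by omega, ?_⟩
    apply segP_congr
    intro t ht
    by_cases htt : t = t0
    · subst htt
      have h1 : i % M + M * e + t + 1 = 2 ^ a * (u + 2 * e) := by
        have hMe2 : M * e = 2 ^ a * (2 * e) := by rw [hM2]; ring
        have hsplit : 2 ^ a * (u + 2 * e) = 2 ^ a * u + 2 ^ a * (2 * e) := by ring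
        omega
      have h2 : pf (i % M + M * e + t) = pf (u + 2 * e - 1) := by
        have hx : i % M + M * e + t = 2 ^ a * (u + 2 * e) - 1 := by omega
        rw [hx, pf_pow_mul _ _ (by omega)]
      have h3 : pf (i + t) = pf (c - 1) := by
        have hx : i + t = 2 ^ a * c - 1 := by omega
        rw [hx, pf_pow_mul _ _ hcpos]
      rw [h2, h3, hpe]
    · apply main
      intro hd
      rcases Nat.lt_or_ge t t0 with hlt | hge
      · have hdd : (2:ℕ) ^ a ∣ t0 - t := by
          have hx : t0 - t = (i + t0 + 1) - (i + t + 1) := by omega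
          rw [hx]; exact Nat.dvd_sub ht0d hd
        have := Nat.le_of_dvd (by omega) hdd
        omega
      · have hgt : t0 < t := by omega
        have hdd : (2:ℕ) ^ a ∣ t - t0 := by
          have hx : t - t0 = (i + t + 1) - (i + t0 + 1) := by omega
          rw [hx]; exact Nat.dvd_sub hd ht0d
        have := Nat.le_of_dvd (by omega) hdd
        omega
  · push_neg at hhole
    refine ⟨i % M, lt_of_lt_of_le (Nat.mod_lt _ hMpos) (by omega), ?_⟩
    apply segP_congr
    intro t ht
    have := main 0 t (by intro hd; exact absurd hd (hhole t ht))
    simpa using this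

def segB (i n : ℕ) : List Bool := (List.range n).map fun t => pfB (i + t)

-- ### basic seg facts
lemma segP_length (i n : ℕ) : (segP i n).length = n := by simp [segP]

lemma segP_eq_segB (i n : ℕ) : segP i n = segB i n := by
  unfold segP segB
  exact List.map_congr_left fun t _ => pf_eq_pfB _

lemma segP_eq_iff {i j n : ℕ} : segP i n = segP j n ↔ ∀ t < n, pf (i + t) = pf (j + t) := by
  constructor
  · intro h t ht
    have := congrArg (fun l => l[t]?) h
    simpa [segP, List.getElem?_map, List.getElem?_range, ht] using this
  · exact segP_congr

lemma factorSet_eq_range (n : ℕ) : factorSet pf n = Set.range fun i => segP i n := by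
  ext w
  constructor
  · rintro ⟨hlen, i, hw⟩
    exact ⟨i, by rw [hw, hlen]; rfl⟩
  · rintro ⟨i, rfl⟩
    exact ⟨segP_length i n, ⟨i, by rw [segP_length]; rfl⟩⟩

lemma factorSet_eq_finset (a n : ℕ) (hn : n ≤ 2 ^ a) :
    factorSet pf n = ↑((Finset.range (2 ^ (a + 3))).image fun i => segB i n) := by
  rw [factorSet_eq_range]
  ext w
  simp only [Set.mem_range, Finset.coe_image, Set.mem_image, Finset.mem_coe,
    Finset.mem_range]
  constructor
  · rintro ⟨i, rfl⟩
    obtain ⟨i', hi', hseg⟩ := canonical_occurrence a n i hn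
    exact ⟨i', hi', by rw [← segP_eq_segB, hseg]⟩
  · rintro ⟨i, _, rfl⟩
    exact ⟨i, (segP_eq_segB i n)⟩

lemma factorSet_finite (n : ℕ) : (factorSet pf n).Finite := by
  rw [factorSet_eq_finset n n (Nat.le_of_lt (Nat.lt_two_pow_self (n := n)))]
  exact Finset.finite_toSet _

lemma rho_eq_card (a n : ℕ) (hn : n ≤ 2 ^ a) :
    rho pf n = ((Finset.range (2 ^ (a + 3))).image fun i => segB i n).card := by
  rw [rho, factorSet_eq_finset a n hn, Set.ncard_coe_finset]

-- ### rigidity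
lemma pf_even_flip (j : ℕ) : pf (2 * j + 2) = ! pf (2 * j) := by
  have h : 2 * j + 2 = 2 * (j + 1) := by ring
  rw [h, pf_even, pf_even]
  rcases Nat.even_or_odd j with he | ho
  · have h1 : j % 2 = 0 := Nat.even_iff.mp he
    have h2 : (j + 1) % 2 = 1 := by omega
    simp [h1, h2]
  · have h1 : j % 2 = 1 := Nat.odd_iff.mp ho
    have h2 : (j + 1) % 2 = 0 := by omega
    simp [h1, h2]

set_option maxRecDepth 100000 in
set_option maxHeartbeats 4000000 in
lemma no_antiperiod8 :
    ∀ i < 2 ^ 6, ¬ (∀ t < 6, pfB (i + t + 2) = ! pfB (i + t)) := by decide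

lemma rigidity {m x y : ℕ} (hm : 8 ≤ m) (h : ∀ t < m, pf (x + t) = pf (y + t))
    (hx : x % 2 = 0) (hy : y % 2 = 1) : False := by
  have hanti : ∀ t < 6, pf (x + t + 2) = ! pf (x + t) := by
    intro t ht
    rcases Nat.even_or_odd (x + t) with he | ho
    · obtain ⟨j, hj⟩ := he
      have e1 : x + t = 2 * j := by omega
      have e2 : x + t + 2 = 2 * j + 2 := by omega
      rw [e1]
      exact pf_even_flip j
    · -- x + t odd, then y + t even
      have h1 : pf (x + t) = pf (y + t) := h t (by omega)
      have h2 : pf (x + t + 2) = pf (y + t + 2) := h (t + 2) (by omega)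
      obtain ⟨j, hj⟩ := ho
      have hyt : (y + t) % 2 = 0 := by omega
      obtain ⟨j', hj'⟩ : ∃ j', y + t = 2 * j' := ⟨(y + t) / 2, by omega⟩
      have e2 : y + t + 2 = 2 * j' + 2 := by omega
      rw [h1, h2, hj']
      exact pf_even_flip j'
  obtain ⟨x', hx', hseg⟩ := canonical_occurrence 3 8 x (by norm_num)
  have hpt : ∀ t < 8, pf (x' + t) = pf (x + t) := segP_eq_iff.mp hseg
  apply no_antiperiod8 x' (by norm_num at hx' ⊢; omega)
  intro t ht
  rw [← pf_eq_pfB, ← pf_eq_pfB]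
  have e1 : x' + t + 2 = x' + (t + 2) := by ring
  rw [e1, hpt (t+2) (by omega), hpt t (by omega), show x + (t+2) = x + t + 2 by ring]
  exact hanti t ht

lemma parity_rigid {m x y : ℕ} (hm : 8 ≤ m) (h : segP x m = segP y m) :
    x % 2 = y % 2 := by
  have hp := segP_eq_iff.mp h
  rcases Nat.even_or_odd x with hex | hox <;> rcases Nat.even_or_odd y with hey | hoy
  · rw [Nat.even_iff.mp hex, Nat.even_iff.mp hey]
  · exact absurd (rigidity hm hp (Nat.even_iff.mp hex) (Nat.odd_iff.mp hoy)) id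
  · exact absurd (rigidity hm (fun t ht => (hp t ht).symm) (Nat.even_iff.mp hey)
      (Nat.odd_iff.mp hox)) id
  · rw [Nat.odd_iff.mp hox, Nat.odd_iff.mp hoy]

-- ### interleaving decompositions
def oddPart (m : ℕ) (w : List Bool) : List Bool := (List.range m).map fun s => w.getD (2*s+1) false
def evenPart (m : ℕ) (w : List Bool) : List Bool := (List.range m).map fun s => w.getD (2*s) false

lemma segP_getD {i n t : ℕ} (ht : t < n) : (segP i n).getD t false = pf (i + t) := by
  simp [segP, List.getD_eq_getElem?_getD, List.getElem?_map, List.getElem?_range, ht]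

lemma oddPart_seg {j m n : ℕ} (h : 2 * m ≤ n) :
    oddPart m (segP (2 * j) n) = segP j m := by
  unfold oddPart segP
  apply List.map_congr_left
  intro s hs
  have hs' : s < m := List.mem_range.mp hs
  have h1 : (segP (2*j) n).getD (2*s+1) false = pf (2*j + (2*s+1)) := segP_getD (by omega)
  rw [show ((List.range n).map fun t => pf (2*j + t)) = segP (2*j) n from rfl, h1]
  have e : 2*j + (2*s+1) = 2*(j+s) + 1 := by ring
  rw [e, pf_odd]

lemma evenPart_seg {j m n : ℕ} (h : 2 * m ≤ n + 1) :
    evenPart m (segP (2 * j + 1) n) = segP j m := by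
  unfold evenPart segP
  apply List.map_congr_left
  intro s hs
  have hs' : s < m := List.mem_range.mp hs
  have h1 : (segP (2*j+1) n).getD (2*s) false = pf (2*j+1 + 2*s) := segP_getD (by omega)
  rw [show ((List.range n).map fun t => pf (2*j+1 + t)) = segP (2*j+1) n from rfl, h1]
  have e : 2*j+1 + 2*s = 2*(j+s) + 1 := by ring
  rw [e, pf_odd]

lemma recon_even {j j' m n : ℕ} (hpar : j % 2 = j' % 2) (hseg : segP j m = segP j' m)
    (hn : n ≤ 2 * m + 1) : segP (2 * j) n = segP (2 * j') n := by
  apply segP_congr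
  intro t ht
  rcases Nat.even_or_odd t with he | ho
  · obtain ⟨s, hs⟩ := he
    have e1 : 2*j + t = 2*(j+s) := by omega
    have e2 : 2*j' + t = 2*(j'+s) := by omega
    rw [e1, e2, pf_even, pf_even]
    have : (j+s) % 2 = (j'+s) % 2 := by omega
    rw [this]
  · obtain ⟨s, hs⟩ := ho
    have e1 : 2*j + t = 2*(j+s) + 1 := by omega
    have e2 : 2*j' + t = 2*(j'+s) + 1 := by omega
    rw [e1, e2, pf_odd, pf_odd]
    exact segP_eq_iff.mp hseg s (by omega)

lemma recon_odd {j j' m n : ℕ} (hpar : j % 2 = j' % 2) (hseg : segP j m = segP j' m)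
    (hn : n ≤ 2 * m) : segP (2 * j + 1) n = segP (2 * j' + 1) n := by
  apply segP_congr
  intro t ht
  rcases Nat.even_or_odd t with he | ho
  · obtain ⟨s, hs⟩ := he
    have e1 : 2*j + 1 + t = 2*(j+s) + 1 := by omega
    have e2 : 2*j' + 1 + t = 2*(j'+s) + 1 := by omega
    rw [e1, e2, pf_odd, pf_odd]
    exact segP_eq_iff.mp hseg s (by omega)
  · obtain ⟨s, hs⟩ := ho
    have e1 : 2*j + 1 + t = 2*(j+s+1) := by omega
    have e2 : 2*j' + 1 + t = 2*(j'+s+1) := by omega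
    rw [e1, e2, pf_even, pf_even]
    have : (j+s+1) % 2 = (j'+s+1) % 2 := by omega
    rw [this]

-- ### the two counting recursions
lemma range_split (n : ℕ) :
    (Set.range fun i => segP i n) =
      (Set.range fun j => segP (2 * j) n) ∪ (Set.range fun j => segP (2 * j + 1) n) := by
  ext w
  constructor
  · rintro ⟨i, rfl⟩
    rcases Nat.even_or_odd i with he | ho
    · obtain ⟨j, hj⟩ := he
      exact Or.inl ⟨j, by show segP (2*j) n = segP i n; rw [show 2*j = i by omega]⟩
    · obtain ⟨j, hj⟩ := ho
      exact Or.inr ⟨j, by show segP (2*j+1) n = segP i n; rw [show 2*j+1 = i by omega]⟩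
  · rintro (⟨j, rfl⟩ | ⟨j, rfl⟩)
    · exact ⟨2*j, rfl⟩
    · exact ⟨2*j+1, rfl⟩

lemma ncard_even_range {m n : ℕ} (hm : 8 ≤ m) (h1 : 2 * m ≤ n) (h2 : n ≤ 2 * m + 1) :
    (Set.range fun j => segP (2 * j) n).ncard = rho pf m := by
  have himg : oddPart m '' (Set.range fun j => segP (2 * j) n) =
      (Set.range fun j => segP j m) := by
    ext u
    constructor
    · rintro ⟨w, ⟨j, rfl⟩, rfl⟩
      exact ⟨j, (oddPart_seg h1).symm⟩
    · rintro ⟨j, rfl⟩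
      exact ⟨segP (2*j) n, ⟨j, rfl⟩, oddPart_seg h1⟩
  have hinj : Set.InjOn (oddPart m) (Set.range fun j => segP (2 * j) n) := by
    rintro w ⟨j, rfl⟩ w' ⟨j', rfl⟩ heq
    rw [oddPart_seg h1, oddPart_seg h1] at heq
    exact recon_even (parity_rigid hm heq) heq h2
  rw [rho, factorSet_eq_range, ← himg, Set.ncard_image_of_injOn hinj]

lemma ncard_odd_range {m n : ℕ} (hm : 8 ≤ m) (h1 : 2 * m ≤ n + 1) (h2 : n ≤ 2 * m) :
    (Set.range fun j => segP (2 * j + 1) n).ncard = rho pf m := by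
  have himg : evenPart m '' (Set.range fun j => segP (2 * j + 1) n) =
      (Set.range fun j => segP j m) := by
    ext u
    constructor
    · rintro ⟨w, ⟨j, rfl⟩, rfl⟩
      exact ⟨j, (evenPart_seg h1).symm⟩
    · rintro ⟨j, rfl⟩
      exact ⟨segP (2*j+1) n, ⟨j, rfl⟩, evenPart_seg h1⟩
  have hinj : Set.InjOn (evenPart m) (Set.range fun j => segP (2 * j + 1) n) := by
    rintro w ⟨j, rfl⟩ w' ⟨j', rfl⟩ heq
    rw [evenPart_seg h1, evenPart_seg h1] at heq
    exact recon_odd (parity_rigid hm heq) heq h2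
  rw [rho, factorSet_eq_range, ← himg, Set.ncard_image_of_injOn hinj]

lemma ranges_disjoint {n : ℕ} (hn : 8 ≤ n) :
    Disjoint (Set.range fun j => segP (2 * j) n) (Set.range fun j => segP (2 * j + 1) n) := by
  rw [Set.disjoint_left]
  rintro w ⟨j, rfl⟩ ⟨j', hj'⟩
  have := parity_rigid hn hj'.symm
  omega

lemma range_finite (n : ℕ) {f : ℕ → ℕ} :
    (Set.range fun j => segP (f j) n).Finite := by
  apply Set.Finite.subset (factorSet_finite n)
  rintro w ⟨j, rfl⟩
  rw [factorSet_eq_range]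
  exact ⟨f j, rfl⟩

lemma rho_even {m : ℕ} (hm : 8 ≤ m) : rho pf (2 * m) = 2 * rho pf m := by
  have h := range_split (2 * m)
  rw [rho, factorSet_eq_range, h,
    Set.ncard_union_eq (ranges_disjoint (by omega)) (range_finite _) (range_finite _),
    ncard_even_range hm (le_refl _) (by omega),
    ncard_odd_range hm (by omega) (by omega)]
  ring

lemma rho_odd {m : ℕ} (hm : 8 ≤ m) : rho pf (2 * m + 1) = rho pf m + rho pf (m + 1) := by
  have h := range_split (2 * m + 1)
  rw [rho, factorSet_eq_range, h,
    Set.ncard_union_eq (ranges_disjoint (by omega)) (range_finite _) (range_finite _),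
    ncard_even_range hm (by omega) (by omega),
    ncard_odd_range (show 8 ≤ m + 1 by omega) (by omega) (by omega)]

set_option maxRecDepth 100000 in
set_option maxHeartbeats 12000000 in
lemma rho_base : ∀ n, 8 ≤ n → n ≤ 17 → rho pf n = 4 * n := by
  intro n h1 h2
  interval_cases n
  · rw [rho_eq_card 4 8 (by norm_num)]; decide
  · rw [rho_eq_card 4 9 (by norm_num)]; decide
  · rw [rho_eq_card 4 10 (by norm_num)]; decide
  · rw [rho_eq_card 4 11 (by norm_num)]; decide
  · rw [rho_eq_card 4 12 (by norm_num)]; decide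
  · rw [rho_eq_card 4 13 (by norm_num)]; decide
  · rw [rho_eq_card 4 14 (by norm_num)]; decide
  · rw [rho_eq_card 4 15 (by norm_num)]; decide
  · rw [rho_eq_card 4 16 (by norm_num)]; decide
  · rw [rho_eq_card 5 17 (by norm_num)]; decide

theorem rho_pf {n : ℕ} (hn : 8 ≤ n) : rho pf n = 4 * n := by
  induction n using Nat.strong_induction_on with
  | _ n ih =>
    by_cases hsmall : n ≤ 17
    · exact rho_base n hn hsmall
    · push_neg at hsmall
      rcases Nat.even_or_odd n with he | ho
      · obtain ⟨m, hm⟩ := he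
        have e : n = 2 * m := by omega
        rw [e, rho_even (by omega), ih m (by omega) (by omega)]
        omega
      · obtain ⟨m, hm⟩ := ho
        rw [hm, rho_odd (by omega), ih m (by omega) (by omega),
          ih (m+1) (by omega) (by omega)]
        omega

-- gap lemma
lemma pf_gap (i : ℕ) : ∃ t < 4, pf (i + t) = true := by
  rcases Nat.even_or_odd i with he | ho
  · obtain ⟨j, hj⟩ := he
    have e : i = 2 * j := by omega
    by_cases h : pf (2 * j) = true
    · exact ⟨0, by omega, by rw [show i + 0 = 2*j by omega]; exact h⟩
    · refine ⟨2, by omega, ?_⟩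
      rw [show i + 2 = 2*j + 2 by omega, pf_even_flip]
      simp [Bool.not_eq_true] at h
      rw [h]; rfl
  · obtain ⟨j, hj⟩ := ho
    by_cases h : pf (2 * (j+1)) = true
    · exact ⟨1, by omega, by rw [show i + 1 = 2*(j+1) by omega]; exact h⟩
    · refine ⟨3, by omega, ?_⟩
      rw [show i + 3 = 2*(j+1) + 2 by omega, pf_even_flip]
      simp [Bool.not_eq_true] at h
      rw [h]; rfl

lemma segP_append (i a b : ℕ) : segP i (a + b) = segP i a ++ segP (i + a) b := by
  unfold segP
  rw [List.range_add, List.map_append, List.map_map]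
  congr 1
  apply List.map_congr_left
  intro t _
  show pf (i + (a + t)) = pf (i + a + t)
  rw [Nat.add_assoc]

lemma segP_count (i k : ℕ) : k ≤ (segP i (4 * k)).count true := by
  induction k generalizing i with
  | zero => omega
  | succ k ih =>
    have e : 4 * (k + 1) = 4 * k + 4 := by ring
    rw [e, segP_append, List.count_append]
    have h1 : 1 ≤ (segP (i + 4 * k) 4).count true := by
      obtain ⟨t, ht, htrue⟩ := pf_gap (i + 4 * k)
      apply List.count_pos_iff.mpr
      rw [← htrue]
      exact List.mem_map.mpr ⟨t, List.mem_range.mpr ht, rfl⟩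
    have := ih i
    omega

def eraseK : ℕ → List Bool → List Bool
  | 0, w => w
  | k+1, w => eraseK k (w.erase true)

lemma mem_of_count_pos {w : List Bool} (h : 0 < w.count true) : true ∈ w :=
  List.count_pos_iff.mp h

lemma eraseK_append (k : ℕ) (a b : List Bool) (h : k ≤ a.count true) :
    eraseK k (a ++ b) = eraseK k a ++ b := by
  induction k generalizing a with
  | zero => rfl
  | succ k ih =>
    show eraseK k ((a ++ b).erase true) = eraseK k (a.erase true) ++ b
    rw [List.erase_append_left _ (mem_of_count_pos (by omega)), ih]
    rw [List.count_erase_self]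
    omega

lemma eraseK_length (k : ℕ) (w : List Bool) (h : k ≤ w.count true) :
    (eraseK k w).length = w.length - k := by
  induction k generalizing w with
  | zero => simp [eraseK]
  | succ k ih =>
    show (eraseK k (w.erase true)).length = w.length - (k+1)
    have hm : true ∈ w := mem_of_count_pos (by omega)
    have hc : (w.erase true).count true = w.count true - 1 := List.count_erase_self
    rw [ih _ (by omega), List.length_erase_of_mem hm]
    have : 0 < w.length := List.length_pos_iff.mpr (by rintro rfl; simp at hm)
    omega

lemma tortoise_iterate (k : ℕ) (w : List Bool) (h : k ≤ w.count true) :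
    tortoise^[k] w = eraseK k w ++ List.replicate k true := by
  induction k generalizing w with
  | zero => simp [eraseK]
  | succ k ih =>
    rw [Function.iterate_succ_apply]
    have hm : true ∈ w := mem_of_count_pos (by omega)
    have ht : tortoise w = w.erase true ++ [true] := by rw [tortoise, if_pos hm]
    rw [ht]
    have hc : (w.erase true ++ [true]).count true = w.count true := by
      rw [List.count_append, List.count_erase_self]
      simp
      omega
    rw [ih _ (by rw [hc]; omega)]
    rw [eraseK_append k _ _ (by rw [List.count_erase_self]; omega)]
    rw [List.append_assoc]
    rfl

lemma tort_inj_transfer {k n₀ n : ℕ} (h4 : 4 * k < n₀) (hn : n₀ ≤ n)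
    (hbase : ∀ x y, tortoise^[k] (segP x n₀) = tortoise^[k] (segP y n₀) →
      segP x n₀ = segP y n₀) :
    ∀ x y, tortoise^[k] (segP x n) = tortoise^[k] (segP y n) → segP x n = segP y n := by
  intro x y heq
  have hsplit : ∀ z m, 4 * k ≤ m → segP z m = segP z (4*k) ++ segP (z + 4*k) (m - 4*k) := by
    intro z m hm
    rw [← segP_append]
    congr 1
    omega
  have hcount : ∀ z m, 4 * k ≤ m → k ≤ (segP z m).count true := by
    intro z m hm
    rw [hsplit z m hm, List.count_append]
    have := segP_count z k
    omega
  rw [tortoise_iterate _ _ (hcount x n (by omega)),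
      tortoise_iterate _ _ (hcount y n (by omega))] at heq
  have heq2 := List.append_inj_left' heq (by simp [segP_length])
  -- heq2 : eraseK k (segP x n) = eraseK k (segP y n)
  rw [hsplit x n (by omega), hsplit y n (by omega),
    eraseK_append _ _ _ (segP_count x k), eraseK_append _ _ _ (segP_count y k)] at heq2
  have hlen : (eraseK k (segP x (4*k))).length = (eraseK k (segP y (4*k))).length := by
    rw [eraseK_length _ _ (segP_count x k), eraseK_length _ _ (segP_count y k),
      segP_length, segP_length]
  obtain ⟨he, hmid⟩ := List.append_inj heq2 hlen
  -- split mid at n₀ - 4k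
  have hmidsplit : ∀ z : ℕ, segP (z + 4*k) (n - 4*k) =
      segP (z + 4*k) (n₀ - 4*k) ++ segP (z + n₀) (n - n₀) := by
    intro z
    have e : z + n₀ = z + 4*k + (n₀ - 4*k) := by omega
    rw [e, ← segP_append]
    congr 1
    omega
  rw [hmidsplit x, hmidsplit y] at hmid
  obtain ⟨hmid0, htail⟩ := List.append_inj hmid (by rw [segP_length, segP_length])
  have hn0 : segP x n₀ = segP y n₀ := by
    apply hbase
    rw [tortoise_iterate _ _ (hcount x n₀ (by omega)),
        tortoise_iterate _ _ (hcount y n₀ (by omega)),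
        hsplit x n₀ (by omega), hsplit y n₀ (by omega),
        eraseK_append _ _ _ (segP_count x k), eraseK_append _ _ _ (segP_count y k),
        he, hmid0]
  have hsplit2 : ∀ z : ℕ, segP z n = segP z n₀ ++ segP (z + n₀) (n - n₀) := by
    intro z
    rw [← segP_append]
    congr 1
    omega
  rw [hsplit2 x, hsplit2 y, hn0, htail]

-- ### final assembly

lemma main_case {k n₀ : ℕ} (hk4 : 4 * k < n₀) (h8 : 8 ≤ n₀)
    (hbase : ∀ x y, tortoise^[k] (segP x n₀) = tortoise^[k] (segP y n₀) →
      segP x n₀ = segP y n₀) :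
    ∀ n, n₀ ≤ n → rhoTortK k pf n = 4 * n := by
  intro n hn
  have hinj : Set.InjOn (tortoise^[k]) (factorSet pf n) := by
    intro w hw v hv heq
    rw [factorSet_eq_range] at hw hv
    obtain ⟨x, rfl⟩ := hw
    obtain ⟨y, rfl⟩ := hv
    exact tort_inj_transfer hk4 hn hbase x y heq
  rw [rhoTortK, Set.ncard_image_of_injOn hinj]
  exact rho_pf (by omega)

lemma hbase_of_check {k n₀ : ℕ} (hn₀ : n₀ ≤ 2 ^ 5)
    (hcard : (((Finset.range (2 ^ 8)).image fun i => segB i n₀).image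
        (tortoise^[k])).card = ((Finset.range (2 ^ 8)).image fun i => segB i n₀).card) :
    ∀ x y, tortoise^[k] (segP x n₀) = tortoise^[k] (segP y n₀) →
      segP x n₀ = segP y n₀ := by
  intro x y h
  have hF : factorSet pf n₀ = ↑((Finset.range (2 ^ 8)).image fun i => segB i n₀) :=
    factorSet_eq_finset 5 n₀ hn₀
  have hinj0 := Finset.injOn_of_card_image_eq hcard
  have hx : segP x n₀ ∈ factorSet pf n₀ := by
    rw [factorSet_eq_range]; exact ⟨x, rfl⟩
  have hy : segP y n₀ ∈ factorSet pf n₀ := by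
    rw [factorSet_eq_range]; exact ⟨y, rfl⟩
  rw [hF] at hx hy
  exact hinj0 hx hy h

set_option maxRecDepth 1000000 in
set_option maxHeartbeats 8000000 in
lemma check14 : (((Finset.range (2 ^ 8)).image fun i => segB i 14).image
    (tortoise^[3])).card = ((Finset.range (2 ^ 8)).image fun i => segB i 14).card := by
  decide

set_option maxRecDepth 1000000 in
set_option maxHeartbeats 12000000 in
lemma check25 : (((Finset.range (2 ^ 8)).image fun i => segB i 25).image
    (tortoise^[4])).card = ((Finset.range (2 ^ 8)).image fun i => segB i 25).card := by
  decide

set_option maxRecDepth 1000000 in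
set_option maxHeartbeats 12000000 in
lemma check26 : (((Finset.range (2 ^ 8)).image fun i => segB i 26).image
    (tortoise^[5])).card = ((Finset.range (2 ^ 8)).image fun i => segB i 26).card := by
  decide

/-- the `k`-tortoise complexity of the paperfolding word satisfies
`ρ^{t(3)}_f(n) = 4n` for `n ≥ 14`, `ρ^{t(4)}_f(n) = 4n` for `n ≥ 25`, and
`ρ^{t(5)}_f(n) = 4n` for `n ≥ 26`. -/
theorem stmt_7 :
    (∀ n : ℕ, 14 ≤ n → rhoTortK 3 pf n = 4 * n) ∧
    (∀ n : ℕ, 25 ≤ n → rhoTortK 4 pf n = 4 * n) ∧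
    (∀ n : ℕ, 26 ≤ n → rhoTortK 5 pf n = 4 * n) := by
  refine ⟨?_, ?_, ?_⟩
  · exact fun n hn => main_case (k := 3) (n₀ := 14) (by norm_num) (by norm_num)
      (hbase_of_check (by norm_num) check14) n hn
  · exact fun n hn => main_case (k := 4) (n₀ := 25) (by norm_num) (by norm_num)
      (hbase_of_check (by norm_num) check25) n hn
  · exact fun n hn => main_case (k := 5) (n₀ := 26) (by norm_num) (by norm_num)
      (hbase_of_check (by norm_num) check26) n hn
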